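/- Linear programming duality for k-wise independence: for any boolean function f: {0,1}^n → {0,1}, any k and any 0 < p < 1, the maximum of Q(f=1) over all k-wise independent distributions Q with marginal p equals the minimum of E_{P_p}[P(X_1,...,X_n)] over all real polynomials P of degree at most k satisfying P ≥ f on all points of the boolean cube, where P_p is the fully independent product measure with marginal p. -/

import Mathlib

open Finset
open scoped Classical

/-- `Q` is a `k`-wise independent distribution on bits indexed by `ι`,
with each bit equal to `true` with probability `p`. -/
def kwise {ι : Type} [Fintype ι] [DecidableEq ι] (k : ℕ) (p : ℝ)
    (Q : (ι → Bool) → ℝ) : Prop :=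
  (∀ x, 0 ≤ Q x) ∧ (∑ x, Q x = 1) ∧
  ∀ S : Finset ι, S.card ≤ k → ∀ b : ι → Bool,
    (∑ x ∈ univ.filter (fun x => ∀ i ∈ S, x i = b i), Q x)
      = ∏ i ∈ S, (if b i then p else 1 - p)

/-- Probability of the event `E` under the distribution `Q`. -/
noncomputable def pr {ι : Type} [Fintype ι] [DecidableEq ι]
    (Q : (ι → Bool) → ℝ) (E : (ι → Bool) → Prop) : ℝ :=
  ∑ x, if E x then Q x else 0

/-- Number of bits equal to `true`. -/
def cnt {ι : Type} [Fintype ι] [DecidableEq ι] (x : ι → Bool) : ℕ :=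
  (univ.filter (fun i => x i = true)).card

open scoped Pointwise

namespace KwiseDual

noncomputable def w (n : ℕ) (p : ℝ) (x : Fin n → Bool) : ℝ :=
  ∏ i, (if x i then p else 1 - p)

def emb {n : ℕ} (x : Fin n → Bool) : Fin n → ℝ := fun i => if x i then 1 else 0

noncomputable def Lf (n : ℕ) (p : ℝ) : ((Fin n → Bool) → ℝ) →ₗ[ℝ] ℝ where
  toFun g := ∑ x, w n p x * g x
  map_add' a b := by simp [mul_add, Finset.sum_add_distrib]
  map_smul' c a := by
    simp only [Pi.smul_apply, smul_eq_mul, RingHom.id_apply, Finset.mul_sum]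
    exact Finset.sum_congr rfl fun x _ => by ring

noncomputable def Tm (n : ℕ) : MvPolynomial (Fin n) ℝ →ₗ[ℝ] ((Fin n → Bool) → ℝ) where
  toFun P := fun x => MvPolynomial.eval (emb x) P
  map_add' a b := by funext x; simp
  map_smul' c a := by funext x; simp [MvPolynomial.smul_eval]

noncomputable def V (n k : ℕ) : Submodule ℝ ((Fin n → Bool) → ℝ) :=
  (MvPolynomial.restrictTotalDegree (Fin n) ℝ k).map (Tm n)

noncomputable def ind {n : ℕ} (S : Finset (Fin n)) (b : Fin n → Bool) : (Fin n → Bool) → ℝ :=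
  fun x => if ∀ i ∈ S, x i = b i then 1 else 0

@[simp] lemma Lf_apply (n : ℕ) (p : ℝ) (g : (Fin n → Bool) → ℝ) :
    Lf n p g = ∑ x, w n p x * g x := rfl

@[simp] lemma Tm_apply (n : ℕ) (P : MvPolynomial (Fin n) ℝ) (x : Fin n → Bool) :
    Tm n P x = MvPolynomial.eval (emb x) P := rfl

lemma sumw (n : ℕ) (p : ℝ) (S : Finset (Fin n)) (b : Fin n → Bool) :
    ∑ x : Fin n → Bool, ind S b x * w n p x = ∏ i ∈ S, (if b i then p else 1 - p) := by
  classical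
  set h : Fin n → Bool → ℝ := fun i c =>
    if i ∈ S then (if c = b i then (if c then p else 1 - p) else 0) else (if c then p else 1 - p)
    with hh
  have hA : ∀ x : Fin n → Bool, ind S b x * w n p x = ∏ i, h i (x i) := by
    intro x
    by_cases hc : ∀ i ∈ S, x i = b i
    · rw [ind, if_pos hc, one_mul, w]
      refine Finset.prod_congr rfl fun i _ => ?_
      by_cases hi : i ∈ S
      · simp [hh, hi, hc i hi]
      · simp [hh, hi]
    · rw [ind, if_neg hc, zero_mul]
      push_neg at hc
      obtain ⟨i, hiS, hib⟩ := hc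
      exact (Finset.prod_eq_zero (Finset.mem_univ i) (by simp [hh, hiS, hib])).symm
  rw [Finset.sum_congr rfl fun x _ => hA x, ← Fintype.prod_sum h]
  have hC : ∀ i, (∑ c : Bool, h i c) = if i ∈ S then (if b i then p else 1 - p) else 1 := by
    intro i
    rw [Fintype.sum_bool]
    by_cases hi : i ∈ S
    · cases hb : b i <;> simp [hh, hi, hb]
    · simp [hh, hi]
  rw [Finset.prod_congr rfl fun i _ => hC i]
  rw [Finset.prod_ite_mem univ S (fun i => if b i then p else 1 - p), Finset.univ_inter]


lemma one_mem (n k : ℕ) : (fun _ : Fin n → Bool => (1:ℝ)) ∈ V n k := by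
  have h1 : (1 : MvPolynomial (Fin n) ℝ) ∈ MvPolynomial.restrictTotalDegree (Fin n) ℝ k := by
    rw [MvPolynomial.mem_restrictTotalDegree, MvPolynomial.totalDegree_one]
    exact Nat.zero_le _
  have hT : Tm n (1 : MvPolynomial (Fin n) ℝ) = fun _ => (1:ℝ) := by funext x; simp
  exact hT ▸ Submodule.mem_map_of_mem h1

lemma ind_mem (n k : ℕ) (S : Finset (Fin n)) (hS : S.card ≤ k) (b : Fin n → Bool) :
    ind S b ∈ V n k := by
  classical
  set P : MvPolynomial (Fin n) ℝ :=
    ∏ i ∈ S, (if b i then MvPolynomial.X i else 1 - MvPolynomial.X i) with hP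
  have hdeg : P.totalDegree ≤ k := by
    refine le_trans (MvPolynomial.totalDegree_finset_prod S _) (le_trans ?_ hS)
    calc ∑ i ∈ S, (if b i then MvPolynomial.X i else 1 - MvPolynomial.X (R := ℝ) i).totalDegree
        ≤ ∑ _i ∈ S, 1 := by
          refine Finset.sum_le_sum fun i _ => ?_
          by_cases hb : b i
          · simp [hb, MvPolynomial.totalDegree_X]
          · simp only [hb, if_false]
            refine le_trans (MvPolynomial.totalDegree_sub _ _) ?_
            simp [MvPolynomial.totalDegree_one, MvPolynomial.totalDegree_X]
      _ = S.card := by simp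
  have hTP : Tm n P = ind S b := by
    funext x
    rw [Tm_apply, hP, map_prod]
    by_cases hc : ∀ i ∈ S, x i = b i
    · rw [ind]; rw [if_pos hc]
      refine Finset.prod_eq_one fun i hi => ?_
      have hx := hc i hi
      cases hb : b i <;> rw [hb] at hx <;> simp [hx, emb]
    · rw [ind, if_neg hc]
      push_neg at hc
      obtain ⟨i, hiS, hib⟩ := hc
      refine Finset.prod_eq_zero hiS ?_
      have hx : x i = !(b i) := by cases hxv : x i <;> cases hbv : b i <;> simp_all
      cases hb : b i <;> rw [hb] at hx <;> simp [emb, hx, hb]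
  exact hTP ▸ Submodule.mem_map_of_mem ((MvPolynomial.mem_restrictTotalDegree _ _ _).mpr hdeg)

lemma pow_emb (n : ℕ) (m : Fin n →₀ ℕ) (x : Fin n → Bool) :
    (∏ i ∈ m.support, emb x i ^ m i) = ind m.support (fun _ => true) x := by
  by_cases hc : ∀ i ∈ m.support, x i = true
  · rw [ind, if_pos hc]
    exact Finset.prod_eq_one fun i hi => by simp [emb, hc i hi]
  · rw [ind, if_neg hc]; push_neg at hc; obtain ⟨i, hi, hxi⟩ := hc
    refine Finset.prod_eq_zero hi ?_
    have hmi : m i ≠ 0 := Finsupp.mem_support_iff.mp hi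
    have hx : x i = false := by simpa using hxi
    simp [emb, hx, zero_pow hmi]

lemma card_support_le (n k : ℕ) (P : MvPolynomial (Fin n) ℝ) (hP : P.totalDegree ≤ k)
    {m : Fin n →₀ ℕ} (hm : m ∈ P.support) : m.support.card ≤ k := by
  refine le_trans ?_ (le_trans (MvPolynomial.le_totalDegree hm) hP)
  rw [Finset.card_eq_sum_ones]
  exact Finset.sum_le_sum fun i hi =>
    Nat.one_le_iff_ne_zero.mpr (Finsupp.mem_support_iff.mp hi)

lemma sum_mul_TmP (n k : ℕ) (p : ℝ) (R : (Fin n → Bool) → ℝ)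
    (hR : ∀ S : Finset (Fin n), S.card ≤ k →
      (∑ x : Fin n → Bool, R x * ind S (fun _ => true) x) = ∏ _i ∈ S, p)
    (P : MvPolynomial (Fin n) ℝ) (hP : P.totalDegree ≤ k) :
    ∑ x : Fin n → Bool, R x * Tm n P x
      = ∑ m ∈ P.support, P.coeff m * ∏ _i ∈ m.support, p := by
  have h1 : ∀ x : Fin n → Bool, R x * Tm n P x
      = ∑ m ∈ P.support, P.coeff m * (R x * ind m.support (fun _ => true) x) := by
    intro x
    rw [Tm_apply, MvPolynomial.eval_eq, Finset.mul_sum]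
    exact Finset.sum_congr rfl fun m _ => by rw [pow_emb]; ring
  rw [Finset.sum_congr rfl fun x _ => h1 x, Finset.sum_comm]
  refine Finset.sum_congr rfl fun m hm => ?_
  rw [← Finset.mul_sum, hR m.support (card_support_le n k P hP hm)]

lemma moment (n k : ℕ) (p : ℝ) (Q : (Fin n → Bool) → ℝ) (hQ : kwise k p Q)
    (P : MvPolynomial (Fin n) ℝ) (hP : P.totalDegree ≤ k) :
    ∑ x : Fin n → Bool, Q x * Tm n P x = Lf n p (Tm n P) := by
  have hQ' : ∀ S : Finset (Fin n), S.card ≤ k →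
      (∑ x : Fin n → Bool, Q x * ind S (fun _ => true) x) = ∏ _i ∈ S, p := by
    intro S hS
    have := hQ.2.2 S hS (fun _ => true)
    rw [Finset.sum_filter] at this
    calc ∑ x : Fin n → Bool, Q x * ind S (fun _ => true) x
        = ∑ x : Fin n → Bool, if ∀ i ∈ S, x i = true then Q x else 0 := by
          refine Finset.sum_congr rfl fun x _ => ?_
          rw [ind]; split <;> simp
      _ = ∏ i ∈ S, (if (fun _ => true) i then p else 1 - p) := by
          rw [← this]
          refine Finset.sum_congr rfl fun x _ => ?_
          congr 1
      _ = ∏ _i ∈ S, p := by simp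
  have hw' : ∀ S : Finset (Fin n), S.card ≤ k →
      (∑ x : Fin n → Bool, w n p x * ind S (fun _ => true) x) = ∏ _i ∈ S, p := by
    intro S hS
    calc ∑ x : Fin n → Bool, w n p x * ind S (fun _ => true) x
        = ∑ x : Fin n → Bool, ind S (fun _ => true) x * w n p x := by
          exact Finset.sum_congr rfl fun x _ => mul_comm _ _
      _ = ∏ i ∈ S, (if (fun _ => true) i then p else 1 - p) := sumw n p S _
      _ = ∏ _i ∈ S, p := by simp
  rw [sum_mul_TmP n k p Q hQ' P hP, Lf_apply, sum_mul_TmP n k p (w n p) hw' P hP]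

noncomputable def DSet (n k : ℕ) (p : ℝ) (h : (Fin n → Bool) → ℝ) : Set ℝ :=
  {v | ∃ g ∈ V n k, (∀ x, h x ≤ g x) ∧ v = Lf n p g}

noncomputable def q (n k : ℕ) (p : ℝ) (h : (Fin n → Bool) → ℝ) : ℝ := sInf (DSet n k p h)

variable {n k : ℕ} {p : ℝ}

lemma w_nonneg (hp0 : 0 ≤ p) (hp1 : p ≤ 1) (x : Fin n → Bool) : 0 ≤ w n p x :=
  Finset.prod_nonneg fun i _ => by split <;> linarith

lemma Lmono (hp0 : 0 ≤ p) (hp1 : p ≤ 1) {a b : (Fin n → Bool) → ℝ} (hab : ∀ x, a x ≤ b x) :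
    Lf n p a ≤ Lf n p b := by
  rw [Lf_apply, Lf_apply]
  exact Finset.sum_le_sum fun x _ => mul_le_mul_of_nonneg_left (hab x) (w_nonneg hp0 hp1 x)

lemma DSet_nonempty (h : (Fin n → Bool) → ℝ) : (DSet n k p h).Nonempty := by
  refine ⟨_, ⟨(∑ x, |h x|) • (fun _ => (1:ℝ)), Submodule.smul_mem _ _ (one_mem n k),
    fun x => ?_, rfl⟩⟩
  have h1 : |h x| ≤ ∑ y, |h y| :=
    Finset.single_le_sum (fun y _ => abs_nonneg (h y)) (Finset.mem_univ x)
  have h2 := le_abs_self (h x)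
  simp only [Pi.smul_apply, smul_eq_mul, mul_one]
  linarith

lemma DSet_bddBelow (hp0 : 0 ≤ p) (hp1 : p ≤ 1) (h : (Fin n → Bool) → ℝ) :
    BddBelow (DSet n k p h) := by
  refine ⟨Lf n p h, ?_⟩
  rintro v ⟨g, hg, hdom, rfl⟩
  exact Lmono hp0 hp1 hdom

lemma q_le (hp0 : 0 ≤ p) (hp1 : p ≤ 1) {h g : (Fin n → Bool) → ℝ} (hg : g ∈ V n k)
    (hdom : ∀ x, h x ≤ g x) : q n k p h ≤ Lf n p g :=
  csInf_le (DSet_bddBelow hp0 hp1 h) ⟨g, hg, hdom, rfl⟩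

lemma le_q {a : ℝ} {h : (Fin n → Bool) → ℝ}
    (ha : ∀ g ∈ V n k, (∀ x, h x ≤ g x) → a ≤ Lf n p g) : a ≤ q n k p h :=
  le_csInf (DSet_nonempty h) (by rintro v ⟨g, hg, hdom, rfl⟩; exact ha g hg hdom)

lemma main_ineq (hp0 : 0 ≤ p) (hp1 : p ≤ 1) {g : (Fin n → Bool) → ℝ} (hg : g ∈ V n k)
    (t : ℝ) (h : (Fin n → Bool) → ℝ) :
    Lf n p g + t * q n k p h ≤ q n k p (g + t • h) := by
  refine le_q fun g' hg' hdom => ?_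
  rcases lt_trichotomy t 0 with ht | ht | ht
  · have hs0 : (0:ℝ) < -t := by linarith
    set h0 : (Fin n → Bool) → ℝ := (-t)⁻¹ • (g - g') with hh0
    have hle : ∀ x, h0 x ≤ h x := by
      intro x
      have hx := hdom x
      simp only [Pi.add_apply, Pi.smul_apply, smul_eq_mul] at hx
      have h2 : g x - g' x ≤ (-t) * h x := by linarith
      have h3 := mul_le_mul_of_nonneg_left h2 (inv_nonneg.mpr hs0.le)
      rw [inv_mul_cancel_left₀ hs0.ne'] at h3
      simpa [hh0] using h3
    have h1 : Lf n p h0 ≤ q n k p h :=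
      le_q fun g2 hg2 hd2 => Lmono hp0 hp1 fun x => (hle x).trans (hd2 x)
    have h2 : t * q n k p h ≤ t * Lf n p h0 := mul_le_mul_of_nonpos_left h1 ht.le
    have h3 : t * Lf n p h0 = Lf n p g' - Lf n p g := by
      rw [hh0, map_smul, map_sub, smul_eq_mul]
      field_simp
      ring_nf
      rw [mul_comm t, mul_comm t, mul_inv_cancel_right₀ ht.ne, mul_inv_cancel_right₀ ht.ne]
    linarith
  · subst ht
    have := Lmono hp0 hp1 (a := g) (b := g') fun x => by
      have := hdom x; simpa using this
    simpa using this
  · set g'' : (Fin n → Bool) → ℝ := t⁻¹ • (g' - g) with hg''def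
    have hg'' : g'' ∈ V n k := Submodule.smul_mem _ _ (Submodule.sub_mem _ hg' hg)
    have hle : ∀ x, h x ≤ g'' x := by
      intro x
      have hx := hdom x
      simp only [Pi.add_apply, Pi.smul_apply, smul_eq_mul] at hx
      have h2 : t * h x ≤ g' x - g x := by linarith
      have h3 := mul_le_mul_of_nonneg_left h2 (inv_nonneg.mpr ht.le)
      rw [inv_mul_cancel_left₀ ht.ne'] at h3
      simpa [hg''def] using h3
    have h1 : q n k p h ≤ Lf n p g'' := q_le hp0 hp1 hg'' hle
    have h2 := mul_le_mul_of_nonneg_left h1 ht.le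
    have h3 : t * Lf n p g'' = Lf n p g' - Lf n p g := by
      rw [hg''def, map_smul, map_sub, smul_eq_mul]
      field_simp
    linarith

lemma q_smul_le (hp0 : 0 ≤ p) (hp1 : p ≤ 1) {c : ℝ} (hc : 0 < c) (h : (Fin n → Bool) → ℝ) :
    q n k p (c • h) ≤ c * q n k p h := by
  have heq : c * q n k p h = sInf (c • DSet n k p h) :=
    (Real.sInf_smul_of_nonneg hc.le _).symm
  rw [heq]
  refine le_csInf ((DSet_nonempty h).smul_set) ?_
  rintro v ⟨v0, ⟨g, hg, hdom, rfl⟩, rfl⟩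
  have h1 := q_le (h := c • h) hp0 hp1 (Submodule.smul_mem _ c hg)
      (fun x => by
        simpa [smul_eq_mul] using mul_le_mul_of_nonneg_left (hdom x) hc.le)
  simpa [map_smul, smul_eq_mul] using h1

lemma q_smul (hp0 : 0 ≤ p) (hp1 : p ≤ 1) {c : ℝ} (hc : 0 < c) (h : (Fin n → Bool) → ℝ) :
    q n k p (c • h) = c * q n k p h := by
  refine le_antisymm (q_smul_le hp0 hp1 hc h) ?_
  have h2 := q_smul_le (n := n) (k := k) hp0 hp1 (inv_pos.mpr hc) (c • h)
  rw [smul_smul, inv_mul_cancel₀ hc.ne', one_smul] at h2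
  have h3 := mul_le_mul_of_nonneg_left h2 hc.le
  rw [mul_inv_cancel_left₀ hc.ne'] at h3
  linarith

lemma q_add (hp0 : 0 ≤ p) (hp1 : p ≤ 1) (h1 h2 : (Fin n → Bool) → ℝ) :
    q n k p (h1 + h2) ≤ q n k p h1 + q n k p h2 := by
  have H1 : ∀ v2 ∈ DSet n k p h2, q n k p (h1 + h2) - v2 ≤ q n k p h1 := by
    rintro v2 ⟨g2, hg2, hd2, rfl⟩
    refine le_q fun g1 hg1 hd1 => ?_
    have := q_le (h := h1 + h2) hp0 hp1 (Submodule.add_mem _ hg1 hg2)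
      (fun x => add_le_add (hd1 x) (hd2 x))
    rw [map_add] at this
    linarith
  have H2 : q n k p (h1 + h2) - q n k p h1 ≤ q n k p h2 :=
    le_csInf (DSet_nonempty h2) fun v2 hv2 => by linarith [H1 v2 hv2]
  linarith

lemma Lf_le_q (hp0 : 0 ≤ p) (hp1 : p ≤ 1) {g : (Fin n → Bool) → ℝ} (hg : g ∈ V n k) :
    Lf n p g ≤ q n k p g :=
  le_q fun _g' _hg' hd => Lmono hp0 hp1 hd

lemma exists_phi (hp0 : 0 ≤ p) (hp1 : p ≤ 1) (fr : (Fin n → Bool) → ℝ) :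
    ∃ φ : ((Fin n → Bool) → ℝ) →ₗ[ℝ] ℝ,
      (∀ g ∈ V n k, φ g = Lf n p g) ∧ (∀ h, φ h ≤ q n k p h) ∧ φ fr = q n k p fr := by
  classical
  set pmV : ((Fin n → Bool) → ℝ) →ₗ.[ℝ] ℝ := ⟨V n k, (Lf n p).comp (V n k).subtype⟩ with hpmV
  by_cases hfr : fr ∈ V n k
  · obtain ⟨φ, hext, hle⟩ := exists_extension_of_le_sublinear pmV (q n k p)
      (fun c hc x => q_smul hp0 hp1 hc x)
      (fun x y => q_add hp0 hp1 x y)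
      (fun z => Lf_le_q hp0 hp1 z.2)
    refine ⟨φ, fun g hg => hext ⟨g, hg⟩, hle, ?_⟩
    rw [hext ⟨fr, hfr⟩]
    refine le_antisymm ?_ (q_le hp0 hp1 hfr fun x => le_refl _)
    exact Lf_le_q hp0 hp1 hfr
  · set pm := LinearPMap.supSpanSingleton pmV fr (q n k p fr) hfr with hpm
    have hdom : pm.domain = V n k ⊔ ℝ ∙ fr := rfl
    have hfsub : ∀ z : pm.domain, pm z ≤ q n k p z := by
      rintro ⟨z, hz⟩
      rw [hdom] at hz
      obtain ⟨g, hg, s, hs, rfl⟩ := Submodule.mem_sup.mp hz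
      obtain ⟨t, rfl⟩ := Submodule.mem_span_singleton.mp hs
      have hmem : g + t • fr ∈ pm.domain := by
        rw [hdom]
        exact Submodule.mem_sup.mpr ⟨g, hg, t • fr,
          Submodule.mem_span_singleton.mpr ⟨t, rfl⟩, rfl⟩
      have happ : pm ⟨g + t • fr, hmem⟩ = Lf n p g + t * q n k p fr :=
        LinearPMap.supSpanSingleton_apply_mk pmV fr (q n k p fr) hfr g hg t
      calc pm ⟨g + t • fr, _⟩ = Lf n p g + t * q n k p fr := happ
        _ ≤ q n k p (g + t • fr) := main_ineq hp0 hp1 hg t fr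
    obtain ⟨φ, hext, hle⟩ := exists_extension_of_le_sublinear pm (q n k p)
      (fun c hc x => q_smul hp0 hp1 hc x)
      (fun x y => q_add hp0 hp1 x y)
      hfsub
    have key : ∀ (g : (Fin n → Bool) → ℝ) (hg : g ∈ V n k) (t : ℝ),
        φ (g + t • fr) = Lf n p g + t * q n k p fr := by
      intro g hg t
      have hmem : g + t • fr ∈ pm.domain := by
        rw [hdom]
        exact Submodule.mem_sup.mpr ⟨g, hg, t • fr,
          Submodule.mem_span_singleton.mpr ⟨t, rfl⟩, rfl⟩
      rw [hext ⟨g + t • fr, hmem⟩]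
      exact LinearPMap.supSpanSingleton_apply_mk pmV fr (q n k p fr) hfr g hg t
    refine ⟨φ, fun g hg => ?_, hle, ?_⟩
    · have := key g hg 0
      simpa using this
    · have := key 0 (Submodule.zero_mem _) 1
      simpa using this

end KwiseDual


open KwiseDual

/-- LP duality: the maximum of `Q(f = 1)` over `k`-wise independent distributions with
marginal `p` equals the minimum of `E_{P_p}[P]` over degree-`≤ k` real polynomials
dominating `f` on the boolean cube. -/
theorem kwise_duality (n k : ℕ) (p : ℝ) (hp0 : 0 < p) (hp1 : p < 1)
    (f : (Fin n → Bool) → Bool) :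
    sSup {v : ℝ | ∃ Q : (Fin n → Bool) → ℝ, kwise k p Q ∧ v = pr Q (fun x => f x = true)}
      = sInf {v : ℝ | ∃ P : MvPolynomial (Fin n) ℝ, P.totalDegree ≤ k ∧
          (∀ x : Fin n → Bool,
            (if f x then (1 : ℝ) else 0) ≤
              MvPolynomial.eval (fun i => if x i then (1 : ℝ) else 0) P) ∧
          v = ∑ x : Fin n → Bool,
            (∏ i, if x i then p else 1 - p) *
              MvPolynomial.eval (fun i => if x i then (1 : ℝ) else 0) P} := by
  classical
  have hp0' : (0:ℝ) ≤ p := hp0.le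
  have hp1' : p ≤ 1 := hp1.le
  set fr : (Fin n → Bool) → ℝ := fun x => if f x then 1 else 0 with hfrdef
  set SP := {v : ℝ | ∃ Q : (Fin n → Bool) → ℝ,
      kwise k p Q ∧ v = pr Q (fun x => f x = true)} with hSPdef
  set SD := {v : ℝ | ∃ P : MvPolynomial (Fin n) ℝ, P.totalDegree ≤ k ∧
      (∀ x : Fin n → Bool,
        (if f x then (1 : ℝ) else 0) ≤
          MvPolynomial.eval (fun i => if x i then (1 : ℝ) else 0) P) ∧
      v = ∑ x : Fin n → Bool,
        (∏ i, if x i then p else 1 - p) *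
          MvPolynomial.eval (fun i => if x i then (1 : ℝ) else 0) P} with hSDdef
  have hSDeq : SD = DSet n k p fr := by
    ext v
    constructor
    · rintro ⟨P, hdeg, hdom, rfl⟩
      refine ⟨Tm n P,
        Submodule.mem_map_of_mem ((MvPolynomial.mem_restrictTotalDegree _ _ _).mpr hdeg),
        fun x => hdom x, ?_⟩
      rw [Lf_apply]
      rfl
    · rintro ⟨g, hgV, hdom, rfl⟩
      obtain ⟨P, hPmem, rfl⟩ := hgV
      refine ⟨P, (MvPolynomial.mem_restrictTotalDegree _ _ _).mp hPmem,
        fun x => hdom x, ?_⟩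
      rw [Lf_apply]
      rfl
  obtain ⟨φ, hφV, hφle, hφfr⟩ := exists_phi (n := n) (k := k) hp0' hp1' fr
  set Q : (Fin n → Bool) → ℝ :=
    fun x => φ (fun y => if x = y then (1:ℝ) else 0) with hQdef
  have hrep : ∀ h : (Fin n → Bool) → ℝ, φ h = ∑ x, h x * Q x := by
    intro h
    conv_lhs => rw [pi_eq_sum_univ h]
    rw [map_sum]
    exact Finset.sum_congr rfl fun x _ => by rw [map_smul, smul_eq_mul]
  have hQ0 : ∀ x, 0 ≤ Q x := by
    intro x
    have h1 := hφle (-(fun y => if x = y then (1:ℝ) else 0))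
    have h2 : q n k p (-(fun y => if x = y then (1:ℝ) else 0)) ≤ 0 := by
      have h3 := q_le (n := n) (k := k) hp0' hp1'
        (h := -(fun y => if x = y then (1:ℝ) else 0))
        (g := (0 : (Fin n → Bool) → ℝ)) (Submodule.zero_mem _)
        (fun y => by
          simp only [Pi.neg_apply, Pi.zero_apply]
          split <;> norm_num)
      simpa using h3
    rw [map_neg] at h1
    have : -Q x ≤ 0 := le_trans h1 h2
    linarith
  have hkw : kwise k p Q := by
    refine ⟨hQ0, ?_, ?_⟩
    · have h1 : ∑ x, Q x = φ (fun _ => 1) := by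
        rw [hrep (fun _ => 1)]
        simp
      rw [h1, hφV _ (one_mem n k), Lf_apply]
      have h2 := sumw n p ∅ (fun _ => true)
      simp only [ind, Finset.notMem_empty, false_implies, implies_true, if_true,
        one_mul, Finset.prod_empty] at h2
      simpa using h2
    · intro S hS b
      rw [Finset.sum_filter]
      refine Eq.trans (Finset.sum_congr rfl
          (g := fun x => ind S b x * Q x) fun x _ => ?_) ?_
      · by_cases hc : ∀ i ∈ S, x i = b i <;> simp [hc, ind]
      · rw [← hrep (ind S b), hφV _ (ind_mem n k S hS b), Lf_apply,
          Finset.sum_congr rfl fun x (_ : x ∈ univ) => mul_comm (w n p x) (ind S b x)]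
        exact sumw n p S b
  have hval : pr Q (fun x => f x = true) = q n k p fr := by
    rw [pr, ← hφfr, hrep fr]
    refine Finset.sum_congr rfl fun x _ => ?_
    by_cases hfx : f x = true <;> simp [hfx, hfrdef]
  have hweak : ∀ v ∈ SP, ∀ u ∈ SD, v ≤ u := by
    rintro v ⟨Q', hQ', rfl⟩ u ⟨P, hdeg, hdomP, rfl⟩
    have h1 : pr Q' (fun x => f x = true) ≤ ∑ x, Q' x * Tm n P x := by
      rw [pr]
      refine Finset.sum_le_sum fun x _ => ?_
      have hd := hdomP x
      by_cases hfx : f x = true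
      · rw [if_pos hfx]
        rw [if_pos hfx] at hd
        calc Q' x = Q' x * 1 := (mul_one _).symm
          _ ≤ Q' x * Tm n P x := mul_le_mul_of_nonneg_left hd (hQ'.1 x)
      · rw [if_neg hfx]
        rw [if_neg hfx] at hd
        exact mul_nonneg (hQ'.1 x) hd
    have h2 := moment n k p Q' hQ' P hdeg
    calc pr Q' (fun x => f x = true) ≤ ∑ x, Q' x * Tm n P x := h1
      _ = Lf n p (Tm n P) := h2
      _ = _ := by rw [Lf_apply]; rfl
  have hmem_d : q n k p fr ∈ SP := ⟨Q, hkw, hval.symm⟩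
  have hSDne : SD.Nonempty := by rw [hSDeq]; exact DSet_nonempty fr
  have hub : ∀ v ∈ SP, v ≤ sInf SD := fun v hv =>
    le_csInf hSDne fun u hu => hweak v hv u hu
  have hq : sInf SD = q n k p fr := by rw [hSDeq]; rfl
  refine le_antisymm (csSup_le ⟨_, hmem_d⟩ hub) ?_
  rw [hq]
  exact le_csSup ⟨sInf SD, fun v hv => hub v hv⟩ hmem_d
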